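/- The tensor-product five-point mixed-derivative formula is fourth-order accurate: for u : ℝ² → ℝ of class C^6 with bounded sixth-order partial derivatives, the quantity (1 - (h²/6)δ²_x)δ_{x0}(1 - (h²/6)δ²_y)δ_{y0} u(x,y) approximates ∂²u/∂x∂y (x,y) with error O(h^4), i.e. bounded by C·h^4 times a bound on the derivatives of u of order up to 6, for some constant C. -/

import Mathlib

open Set Finset

set_option maxHeartbeats 1000000


section Helpers

variable {F : Type*} [NormedAddCommGroup F] [NormedSpace ℝ F]

lemma hasDerivAt_line (f : ℝ × ℝ → F) (hf : Differentiable ℝ f) (p v : ℝ × ℝ) (t : ℝ) :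
    HasDerivAt (fun τ : ℝ => f (p + τ • v)) (fderiv ℝ f (p + t • v) v) t := by
  have hline : HasDerivAt (fun τ : ℝ => p + τ • v) v t := by
    simpa using ((hasDerivAt_id t).smul_const v).const_add p
  exact ((hf (p + t • v)).hasFDerivAt.comp_hasDerivAt t hline)

lemma iteratedDeriv_line (f : ℝ × ℝ → ℝ) {n : ℕ} (hf : ContDiff ℝ (n : ℕ∞) f) (p v : ℝ × ℝ) :
    ∀ (k : ℕ), k ≤ n → ∀ t : ℝ, iteratedDeriv k (fun τ : ℝ => f (p + τ • v)) t
      = iteratedFDeriv ℝ k f (p + t • v) (fun _ => v) := by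
  intro k
  induction k with
  | zero => intro _ t; simp
  | succ k IH =>
    intro hk t
    have IH' : iteratedDeriv k (fun τ : ℝ => f (p + τ • v))
        = fun τ => iteratedFDeriv ℝ k f (p + τ • v) (fun _ => v) :=
      funext (IH (by omega) ·)
    rw [iteratedDeriv_succ, IH']
    have hck : ContDiff ℝ 1 (iteratedFDeriv ℝ k f) := by
      apply hf.iteratedFDeriv_right
      have : ((1 + k : ℕ) : WithTop ℕ∞) ≤ (n : WithTop ℕ∞) := by
        exact_mod_cast (by omega : 1 + k ≤ n)
      simpa using this
    have hW : HasDerivAt (fun τ : ℝ => iteratedFDeriv ℝ k f (p + τ • v))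
        (fderiv ℝ (iteratedFDeriv ℝ k f) (p + t • v) v) t :=
      hasDerivAt_line _ (hck.differentiable one_ne_zero) p v t
    have hA := ((ContinuousMultilinearMap.apply ℝ (fun _ : Fin k => ℝ × ℝ) ℝ
        (fun _ => v)).hasFDerivAt.comp_hasDerivAt t hW)
    have := hA.deriv
    simp only [Function.comp_def, ContinuousMultilinearMap.apply_apply] at this
    rw [this]
    rw [iteratedFDeriv_succ_apply_left]
    rfl

lemma abs_iteratedDeriv_line_le (f : ℝ × ℝ → ℝ) {n k : ℕ} (hf : ContDiff ℝ (n : ℕ∞) f)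
    (hk : k ≤ n) (p v : ℝ × ℝ) (hv : ‖v‖ ≤ 1) {M : ℝ}
    (hM : ∀ q, ‖iteratedFDeriv ℝ k f q‖ ≤ M) (t : ℝ) :
    |iteratedDeriv k (fun τ : ℝ => f (p + τ • v)) t| ≤ M := by
  have hM0 : 0 ≤ M := le_trans (norm_nonneg _) (hM 0)
  rw [iteratedDeriv_line f hf p v k hk t]
  calc |iteratedFDeriv ℝ k f (p + t • v) (fun _ => v)|
      ≤ ‖iteratedFDeriv ℝ k f (p + t • v)‖ * ∏ _i : Fin k, ‖v‖ :=
        (iteratedFDeriv ℝ k f (p + t • v)).le_opNorm _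
    _ ≤ M * 1 := by
        apply mul_le_mul (hM _) ?_ (by positivity) hM0
        calc ∏ _i : Fin k, ‖v‖ = ‖v‖ ^ k := by simp
          _ ≤ 1 := pow_le_one₀ (norm_nonneg _) hv
    _ = M := mul_one M

end Helpers



lemma myIteratedDerivWithin_eq (g : ℝ → ℝ) {n : ℕ} (hg : ContDiff ℝ (n : ℕ∞) g) {s : Set ℝ}
    (hs : UniqueDiffOn ℝ s) {y : ℝ} (hy : y ∈ s) {k : ℕ} (hk : k ≤ n) :
    iteratedDerivWithin k g s y = iteratedDeriv k g y := by
  rw [iteratedDerivWithin_eq_iteratedFDerivWithin, iteratedDeriv_eq_iteratedFDeriv]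
  congr 1
  have hts : HasFTaylorSeriesUpTo (n : ℕ∞) g (ftaylorSeries ℝ g) :=
    (contDiff_iff_ftaylorSeries).1 hg
  have := (hts.hasFTaylorSeriesUpToOn s).eq_iteratedFDerivWithin_of_uniqueDiffOn
    (m := k) (by exact_mod_cast hk) hs hy
  rw [← this]
  rfl

lemma taylor5_nonneg (g : ℝ → ℝ) (hg : ContDiff ℝ 5 g) {K : ℝ}
    (hK : ∀ t, |iteratedDeriv 5 g t| ≤ K) (a s : ℝ) (hs : 0 ≤ s) :
    |g (a + s) - ∑ k ∈ range 5, s ^ k / k.factorial * iteratedDeriv k g a| ≤ K * s ^ 5 := by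
  have hK0 : 0 ≤ K := le_trans (abs_nonneg _) (hK a)
  rcases eq_or_lt_of_le hs with rfl | hs'
  · have : ∑ k ∈ range 5, (0:ℝ) ^ k / k.factorial * iteratedDeriv k g a = g a := by
      rw [Finset.sum_range_succ, Finset.sum_range_succ, Finset.sum_range_succ,
        Finset.sum_range_succ, Finset.sum_range_succ]
      norm_num
    simp [this]
  · have hab : a ≤ a + s := by linarith
    have huniq : UniqueDiffOn ℝ (Icc a (a + s)) := uniqueDiffOn_Icc (by linarith)
    have hbound := taylor_mean_remainder_bound (n := 4) (C := K) hab
      (by norm_num; exact hg.contDiffOn) (right_mem_Icc.2 hab) ?_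
    · have hT : taylorWithinEval g 4 (Icc a (a + s)) a (a + s)
          = ∑ k ∈ range 5, s ^ k / k.factorial * iteratedDeriv k g a := by
        rw [taylor_within_apply]
        apply Finset.sum_congr rfl
        intro k hk
        rw [myIteratedDerivWithin_eq g (n := 5) (by exact_mod_cast hg) huniq
          (left_mem_Icc.2 hab) (by simp at hk; omega)]
        rw [smul_eq_mul]
        ring_nf
      rw [hT] at hbound
      calc |g (a + s) - ∑ k ∈ range 5, s ^ k / k.factorial * iteratedDeriv k g a|
          ≤ K * (a + s - a) ^ (4 + 1) / (4 : ℕ).factorial := hbound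
        _ ≤ K * s ^ 5 := by
            rw [show a + s - a = s by ring]
            have hnn : 0 ≤ K * s ^ 5 := by positivity
            have hfact : ((Nat.factorial 4 : ℕ) : ℝ) = 24 := by norm_num [Nat.factorial]
            rw [hfact]
            norm_num
            linarith
    · intro t ht
      rw [myIteratedDerivWithin_eq g (n := 5) (by exact_mod_cast hg) huniq ht (by norm_num)]
      exact hK t


lemma taylor5 (g : ℝ → ℝ) (hg : ContDiff ℝ 5 g) {K : ℝ}
    (hK : ∀ t, |iteratedDeriv 5 g t| ≤ K) (a s : ℝ) :
    |g (a + s) - ∑ k ∈ range 5, s ^ k / k.factorial * iteratedDeriv k g a| ≤ K * |s| ^ 5 := by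
  rcases le_or_gt 0 s with hs | hs
  · rw [abs_of_nonneg hs]; exact taylor5_nonneg g hg hK a s hs
  · -- reflection
    set r : ℝ → ℝ := fun t => g (2 * a + -t) with hr
    have hrit : ∀ (k : ℕ) (t : ℝ), iteratedDeriv k r t = (-1 : ℝ) ^ k * iteratedDeriv k g (2 * a + -t) := by
      intro k t
      have h1 : r = (fun z => g (2 * a + z)) ∘ (fun t : ℝ => -t) := rfl
      rw [hr]
      rw [show (fun t : ℝ => g (2 * a + -t)) = (fun t : ℝ => (fun z => g (2 * a + z)) (-t)) from rfl]
      rw [iteratedDeriv_comp_neg k (fun z => g (2 * a + z)) t]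
      rw [iteratedDeriv_comp_const_add k g (2 * a)]
      simp [smul_eq_mul]
    have hrc : ContDiff ℝ 5 r := by
      have : ContDiff ℝ 5 (fun t : ℝ => 2 * a + -t) := by
        apply ContDiff.add contDiff_const
        exact contDiff_id.neg
      exact hg.comp this
    have hrK : ∀ t, |iteratedDeriv 5 r t| ≤ K := by
      intro t
      rw [hrit 5 t]
      simpa [abs_mul] using hK (2 * a + -t)
    have := taylor5_nonneg r hrc hrK a (-s) (by linarith)
    have heq1 : r (a + -s) = g (a + s) := by rw [hr]; ring_nf
    have heq2 : ∀ k : ℕ, iteratedDeriv k r a = (-1 : ℝ) ^ k * iteratedDeriv k g a := by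
      intro k; rw [hrit k a]; ring_nf
    rw [heq1] at this
    have hsum : ∑ k ∈ range 5, (-s) ^ k / k.factorial * iteratedDeriv k r a
        = ∑ k ∈ range 5, s ^ k / k.factorial * iteratedDeriv k g a := by
      apply Finset.sum_congr rfl
      intro k _
      rw [heq2 k]
      rw [show (-s) ^ k = (-1:ℝ)^k * s ^ k by rw [neg_pow]]
      have h11 : (-1:ℝ)^k * (-1:ℝ)^k = 1 := by
        rw [← pow_add]; exact Even.neg_one_pow ⟨k, rfl⟩
      field_simp
      linear_combination (s ^ k * iteratedDeriv k g a) * h11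
    rw [hsum] at this
    calc |g (a + s) - ∑ k ∈ range 5, s ^ k / k.factorial * iteratedDeriv k g a|
        ≤ K * (-s) ^ 5 := this
      _ = K * |s| ^ 5 := by rw [abs_of_neg hs]


noncomputable def Phi (u : ℝ × ℝ → ℝ) (y h s : ℝ) : ℝ :=
  (-u (s, y + 2*h) + 8 * u (s, y + h) - 8 * u (s, y - h) + u (s, y - 2*h)) / (12 * h)

lemma hasDerivAt_sliceY (f : ℝ × ℝ → ℝ) (hf : Differentiable ℝ f) (s t : ℝ) :
    HasDerivAt (fun τ : ℝ => f (s, τ)) (fderiv ℝ f (s, t) (0, 1)) t := by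
  have h1 := hasDerivAt_line f hf (s, 0) (0, 1) t
  have heq : (fun τ : ℝ => f ((s, (0:ℝ)) + τ • ((0:ℝ), (1:ℝ)))) = fun τ : ℝ => f (s, τ) := by
    funext τ; norm_num [Prod.smul_mk, Prod.mk_add_mk]
  have h2 : ((s, (0:ℝ)) + t • ((0:ℝ), (1:ℝ))) = (s, t) := by
    norm_num [Prod.smul_mk, Prod.mk_add_mk]
  rw [heq, h2] at h1
  exact h1

lemma hasDerivAt_sliceX (f : ℝ × ℝ → ℝ) (hf : Differentiable ℝ f) (s t : ℝ) :
    HasDerivAt (fun τ : ℝ => f (τ, t)) (fderiv ℝ f (s, t) (1, 0)) s := by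
  have h1 := hasDerivAt_line f hf (0, t) (1, 0) s
  have heq : (fun τ : ℝ => f (((0:ℝ), t) + τ • ((1:ℝ), (0:ℝ)))) = fun τ : ℝ => f (τ, t) := by
    funext τ; norm_num [Prod.smul_mk, Prod.mk_add_mk]
  have h2 : (((0:ℝ), t) + s • ((1:ℝ), (0:ℝ))) = (s, t) := by
    norm_num [Prod.smul_mk, Prod.mk_add_mk]
  rw [heq, h2] at h1
  exact h1


-- bound on iterated derivatives of p ↦ fderiv u p v, for ‖v‖ ≤ 1
lemma psi_bound (u : ℝ × ℝ → ℝ) (hu : ContDiff ℝ 6 u) (M : ℝ)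
    (hM : ∀ i : ℕ, i ≤ 6 → ∀ p : ℝ × ℝ, ‖iteratedFDeriv ℝ i u p‖ ≤ M)
    (v : ℝ × ℝ) (hv : ‖v‖ ≤ 1) :
    ∀ i : ℕ, i ≤ 5 → ∀ p : ℝ × ℝ, ‖iteratedFDeriv ℝ i (fun q => fderiv ℝ u q v) p‖ ≤ M := by
  intro i hi p
  have hM0 : 0 ≤ M := le_trans (norm_nonneg _) (hM 0 (by norm_num) (0, 0))
  set c : (ℝ × ℝ →L[ℝ] ℝ) →L[ℝ] ℝ := ContinuousLinearMap.apply ℝ ℝ v with hc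
  have hcnorm : ‖c‖ ≤ 1 := by
    apply ContinuousLinearMap.opNorm_le_bound c zero_le_one
    intro L
    calc ‖c L‖ = ‖L v‖ := rfl
      _ ≤ ‖L‖ * ‖v‖ := L.le_opNorm v
      _ ≤ 1 * ‖L‖ := by nlinarith [norm_nonneg L, norm_nonneg (L v)]
  have hufd : ContDiff ℝ 5 (fderiv ℝ u) := hu.fderiv_right (by norm_num)
  have hcompeq : (fun q => fderiv ℝ u q v) = ⇑c ∘ (fderiv ℝ u) := rfl
  rw [hcompeq, ContinuousLinearMap.iteratedFDeriv_comp_left c hufd.contDiffAt (x := p) (by exact_mod_cast hi)]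
  calc ‖c.compContinuousMultilinearMap (iteratedFDeriv ℝ i (fderiv ℝ u) p)‖
      ≤ ‖c‖ * ‖iteratedFDeriv ℝ i (fderiv ℝ u) p‖ :=
        c.norm_compContinuousMultilinearMap_le _
    _ ≤ 1 * ‖iteratedFDeriv ℝ (i + 1) u p‖ := by
        rw [norm_iteratedFDeriv_fderiv]
        exact mul_le_mul_of_nonneg_right hcnorm (norm_nonneg _)
    _ ≤ M := by rw [one_mul]; exact hM (i + 1) (by omega) p


lemma onedim (g : ℝ → ℝ) (hg : ContDiff ℝ 5 g) {K : ℝ}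
    (hK : ∀ t, |iteratedDeriv 5 g t| ≤ K) (a h : ℝ) (hh : 0 < h) :
    |(-g (a + 2*h) + 8 * g (a + h) - 8 * g (a - h) + g (a - 2*h)) / (12 * h) - deriv g a|
      ≤ 7 * (K * h ^ 4) := by
  have hK0 : 0 ≤ K := le_trans (abs_nonneg _) (hK a)
  have hP : ∀ s : ℝ, (∑ k ∈ range 5, s ^ k / k.factorial * iteratedDeriv k g a)
      = iteratedDeriv 0 g a + s * iteratedDeriv 1 g a
        + s^2/2 * iteratedDeriv 2 g a + s^3/6 * iteratedDeriv 3 g a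
        + s^4/24 * iteratedDeriv 4 g a := by
    intro s
    rw [Finset.sum_range_succ, Finset.sum_range_succ, Finset.sum_range_succ,
      Finset.sum_range_succ, Finset.sum_range_succ]
    norm_num [Nat.factorial]
  have E1 := taylor5 g hg hK a (2*h)
  have E2 := taylor5 g hg hK a h
  have E3 := taylor5 g hg hK a (-h)
  have E4 := taylor5 g hg hK a (-(2*h))
  rw [hP] at E1 E2 E3 E4
  rw [abs_of_pos hh] at E2
  rw [abs_of_pos (by linarith : (0:ℝ) < 2*h)] at E1
  rw [abs_neg, abs_of_pos hh] at E3
  rw [abs_neg, abs_of_pos (by linarith : (0:ℝ) < 2*h)] at E4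
  rw [show K * (2*h)^5 = 32 * (K * h^5) by ring] at E1 E4
  rw [show K * h^5 = 1 * (K * h^5) by ring] at E2 E3
  rw [abs_le] at E1 E2 E3 E4
  have hd : deriv g a = iteratedDeriv 1 g a := by rw [iteratedDeriv_one]
  rw [show a - h = a + -h by ring, show a - 2*h = a + -(2*h) by ring]
  set d0 := iteratedDeriv 0 g a
  set d1 := iteratedDeriv 1 g a
  set d2 := iteratedDeriv 2 g a
  set d3 := iteratedDeriv 3 g a
  set d4 := iteratedDeriv 4 g a
  set A1 := g (a + 2*h) - (d0 + 2*h*d1 + (2*h)^2/2*d2 + (2*h)^3/6*d3 + (2*h)^4/24*d4) with hA1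
  set A2 := g (a + h) - (d0 + h*d1 + h^2/2*d2 + h^3/6*d3 + h^4/24*d4) with hA2
  set A3 := g (a + -h) - (d0 + (-h)*d1 + (-h)^2/2*d2 + (-h)^3/6*d3 + (-h)^4/24*d4) with hA3
  set A4 := g (a + -(2*h)) - (d0 + (-(2*h))*d1 + (-(2*h))^2/2*d2 + (-(2*h))^3/6*d3
    + (-(2*h))^4/24*d4) with hA4
  have key : (-g (a + 2*h) + 8 * g (a + h) - 8 * g (a + -h) + g (a + -(2*h))) / (12 * h) - deriv g a
      = (-A1 + 8 * A2 - 8 * A3 + A4) / (12 * h) := by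
    rw [hd, hA1, hA2, hA3, hA4]
    field_simp
    ring
  rw [key]
  rw [abs_div, abs_of_pos (by linarith : (0:ℝ) < 12 * h)]
  rw [div_le_iff₀ (by linarith : (0:ℝ) < 12 * h)]
  have hb : |(-A1 + 8 * A2 - 8 * A3 + A4)| ≤ 80 * (K * h^5) := by
    rw [abs_le]
    constructor <;> linarith [E1.1, E1.2, E2.1, E2.2, E3.1, E3.2, E4.1, E4.2]
  calc |(-A1 + 8 * A2 - 8 * A3 + A4)| ≤ 80 * (K * h^5) := hb
    _ ≤ 7 * (K * h ^ 4) * (12 * h) := by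
        have h5 : 0 ≤ K * h^5 := by positivity
        nlinarith [h5]




lemma lipbound (w : ℝ → ℝ) (hw : Differentiable ℝ w) {K : ℝ}
    (hK : ∀ t, |deriv w t| ≤ K) (a h : ℝ) (hh : 0 < h) :
    |(-w (a + 2*h) + 8 * w (a + h) - 8 * w (a - h) + w (a - 2*h)) / (12 * h)| ≤ 2 * K := by
  have hK0 : 0 ≤ K := le_trans (abs_nonneg _) (hK a)
  have mvt : ∀ b c : ℝ, |w b - w c| ≤ K * |b - c| := by
    intro b c
    have := Convex.norm_image_sub_le_of_norm_deriv_le (f := w) (s := Set.univ)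
      (fun x _ => (hw x)) (fun x _ => hK x) convex_univ (mem_univ c) (mem_univ b)
    simpa [Real.norm_eq_abs] using this
  have m1 := mvt (a - 2*h) (a + 2*h)
  have m2 := mvt (a + h) (a - h)
  rw [show a - 2*h - (a + 2*h) = -(4*h) by ring, abs_neg,
    abs_of_pos (by linarith : (0:ℝ) < 4*h)] at m1
  rw [show a + h - (a - h) = 2*h by ring, abs_of_pos (by linarith : (0:ℝ) < 2*h)] at m2
  have hnum : |(-w (a + 2*h) + 8 * w (a + h) - 8 * w (a - h) + w (a - 2*h))| ≤ 20 * (K * h) := by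
    have expand : -w (a + 2*h) + 8 * w (a + h) - 8 * w (a - h) + w (a - 2*h)
        = (w (a - 2*h) - w (a + 2*h)) + 8 * (w (a + h) - w (a - h)) := by ring
    rw [expand]
    calc |(w (a - 2*h) - w (a + 2*h)) + 8 * (w (a + h) - w (a - h))|
        ≤ |w (a - 2*h) - w (a + 2*h)| + |8 * (w (a + h) - w (a - h))| := abs_add_le _ _
      _ = |w (a - 2*h) - w (a + 2*h)| + 8 * |w (a + h) - w (a - h)| := by
          rw [abs_mul]; norm_num
      _ ≤ K * (4*h) + 8 * (K * (2*h)) := by linarith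
      _ = 20 * (K * h) := by ring
  rw [abs_div, abs_of_pos (by linarith : (0:ℝ) < 12 * h)]
  rw [div_le_iff₀ (by linarith : (0:ℝ) < 12 * h)]
  nlinarith [hnum]

lemma main_est (u : ℝ × ℝ → ℝ) (x y h M : ℝ) (hh : 0 < h) (hu : ContDiff ℝ 6 u)
    (hM : ∀ i : ℕ, i ≤ 6 → ∀ p : ℝ × ℝ, ‖iteratedFDeriv ℝ i u p‖ ≤ M) :
    |(-Phi u y h (x + 2*h) + 8 * Phi u y h (x + h) - 8 * Phi u y h (x - h)
        + Phi u y h (x - 2*h)) / (12 * h)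
      - deriv (fun s => deriv (fun t => u (s, t)) y) x| ≤ 21 * (M * h ^ 4) := by
  have hM0 : 0 ≤ M := le_trans (norm_nonneg _) (hM 0 (by norm_num) (0, 0))
  have he1 : ‖((1:ℝ), (0:ℝ))‖ ≤ 1 := by simp [Prod.norm_def]
  have he2 : ‖((0:ℝ), (1:ℝ))‖ ≤ 1 := by simp [Prod.norm_def]
  have hu5 : ContDiff ℝ 5 u := hu.of_le (by norm_num)
  have hud : Differentiable ℝ u := hu.differentiable (by norm_num)
  set psi1 : ℝ × ℝ → ℝ := fun q => fderiv ℝ u q (1, 0) with hpsi1def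
  set psi2 : ℝ × ℝ → ℝ := fun q => fderiv ℝ u q (0, 1) with hpsi2def
  have hufd : ContDiff ℝ 5 (fderiv ℝ u) := hu.fderiv_right (by norm_num)
  have hpsi1 : ContDiff ℝ 5 psi1 := hufd.clm_apply contDiff_const
  have hpsi2 : ContDiff ℝ 5 psi2 := hufd.clm_apply contDiff_const
  have hdpsi1 : Differentiable ℝ psi1 := hpsi1.differentiable (by norm_num)
  have hdpsi2 : Differentiable ℝ psi2 := hpsi2.differentiable (by norm_num)
  have hpsi1b := psi_bound u hu M hM (1, 0) he1
  have hpsi2b := psi_bound u hu M hM (0, 1) he2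
  -- the inner function G
  set G : ℝ → ℝ := fun s => deriv (fun t => u (s, t)) y with hGdef
  have hGeq : G = fun s => psi2 (s, y) := by
    funext s; exact (hasDerivAt_sliceY u hud s y).deriv
  have hG5 : ContDiff ℝ 5 G := by
    rw [hGeq]; exact hpsi2.comp (contDiff_id.prodMk contDiff_const)
  -- slice bound helper
  have sliceX_bound : ∀ (f : ℝ × ℝ → ℝ), ContDiff ℝ 5 f →
      (∀ q, ‖iteratedFDeriv ℝ 5 f q‖ ≤ M) → ∀ (b s : ℝ),
      |iteratedDeriv 5 (fun τ : ℝ => f (τ, b)) s| ≤ M := by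
    intro f hf hfb b s
    have heq : (fun τ : ℝ => f (τ, b)) = fun τ : ℝ => f (((0:ℝ), b) + τ • ((1:ℝ), (0:ℝ))) := by
      funext τ; norm_num [Prod.smul_mk, Prod.mk_add_mk]
    rw [heq]
    exact abs_iteratedDeriv_line_le f (n := 5) (by exact_mod_cast hf) le_rfl _ _ he1 hfb s
  have sliceY_bound : ∀ (f : ℝ × ℝ → ℝ), ContDiff ℝ 5 f →
      (∀ q, ‖iteratedFDeriv ℝ 5 f q‖ ≤ M) → ∀ (b s : ℝ),
      |iteratedDeriv 5 (fun τ : ℝ => f (b, τ)) s| ≤ M := by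
    intro f hf hfb b s
    have heq : (fun τ : ℝ => f (b, τ)) = fun τ : ℝ => f ((b, (0:ℝ)) + τ • ((0:ℝ), (1:ℝ))) := by
      funext τ; norm_num [Prod.smul_mk, Prod.mk_add_mk]
    rw [heq]
    exact abs_iteratedDeriv_line_le f (n := 5) (by exact_mod_cast hf) le_rfl _ _ he2 hfb s
  have hGK : ∀ s, |iteratedDeriv 5 G s| ≤ M := by
    rw [hGeq]
    exact fun s => sliceX_bound psi2 hpsi2 (hpsi2b 5 (by norm_num)) y s
  -- Clairaut
  have hdfd : Differentiable ℝ (fderiv ℝ u) := hufd.differentiable (by norm_num)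
  have hcomp : ∀ (v p w : ℝ × ℝ),
      fderiv ℝ (fun q => fderiv ℝ u q v) p w = fderiv ℝ (fderiv ℝ u) p w v := by
    intro v p w
    have hc : (fun q => fderiv ℝ u q v)
        = ⇑(ContinuousLinearMap.apply ℝ ℝ v) ∘ (fderiv ℝ u) := rfl
    rw [hc, fderiv_comp p (ContinuousLinearMap.apply ℝ ℝ v).differentiable.differentiableAt
      (hdfd p)]
    simp [ContinuousLinearMap.fderiv]
  have hsym : ∀ s : ℝ, fderiv ℝ psi2 (s, y) (1, 0) = fderiv ℝ psi1 (s, y) (0, 1) := by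
    intro s
    rw [hpsi1def, hpsi2def, hcomp, hcomp]
    exact second_derivative_symmetric (fun q => (hud q).hasFDerivAt)
      (hdfd (s, y)).hasFDerivAt (1, 0) (0, 1)
  -- W and its derivative
  set W : ℝ → ℝ := fun s => Phi u y h s - G s with hWdef
  have hWD : ∀ s : ℝ, HasDerivAt W
      ((-psi1 (s, y + 2*h) + 8 * psi1 (s, y + h) - 8 * psi1 (s, y - h)
        + psi1 (s, y - 2*h)) / (12 * h) - fderiv ℝ psi2 (s, y) (1, 0)) s := by
    intro s
    have h1 := hasDerivAt_sliceX u hud s (y + 2*h)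
    have h2 := hasDerivAt_sliceX u hud s (y + h)
    have h3 := hasDerivAt_sliceX u hud s (y - h)
    have h4 := hasDerivAt_sliceX u hud s (y - 2*h)
    have hphi : HasDerivAt (fun τ => Phi u y h τ)
        ((-psi1 (s, y + 2*h) + 8 * psi1 (s, y + h) - 8 * psi1 (s, y - h)
          + psi1 (s, y - 2*h)) / (12 * h)) s := by
      unfold Phi
      exact (((h1.neg.add (h2.const_mul 8)).sub (h3.const_mul 8)).add h4).div_const (12 * h)
    have hg : HasDerivAt G (fderiv ℝ psi2 (s, y) (1, 0)) s := by
      rw [hGeq]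
      exact hasDerivAt_sliceX psi2 hdpsi2 s y
    exact hphi.sub hg
  have hWd : ∀ s : ℝ, |deriv W s| ≤ 7 * (M * h ^ 4) := by
    intro s
    rw [(hWD s).deriv, hsym s]
    have hdg : fderiv ℝ psi1 (s, y) (0, 1) = deriv (fun t => psi1 (s, t)) y :=
      ((hasDerivAt_sliceY psi1 hdpsi1 s y).deriv).symm
    rw [hdg]
    have hsl5 : ContDiff ℝ 5 (fun t : ℝ => psi1 (s, t)) :=
      hpsi1.comp (contDiff_const.prodMk contDiff_id)
    have hslK : ∀ t : ℝ, |iteratedDeriv 5 (fun t : ℝ => psi1 (s, t)) t| ≤ M :=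
      fun t => sliceY_bound psi1 hpsi1 (hpsi1b 5 (by norm_num)) s t
    simpa using onedim (fun t : ℝ => psi1 (s, t)) hsl5 hslK y h hh
  have hWdiff : Differentiable ℝ W := fun s => (hWD s).differentiableAt
  -- split
  have hsplit : (-Phi u y h (x + 2*h) + 8 * Phi u y h (x + h) - 8 * Phi u y h (x - h)
        + Phi u y h (x - 2*h)) / (12 * h) - deriv G x
      = (-W (x + 2*h) + 8 * W (x + h) - 8 * W (x - h) + W (x - 2*h)) / (12 * h)
        + ((-G (x + 2*h) + 8 * G (x + h) - 8 * G (x - h) + G (x - 2*h)) / (12 * h)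
          - deriv G x) := by
    rw [hWdef]; ring
  rw [hsplit]
  have t1 := lipbound W hWdiff hWd x h hh
  have t2 := onedim G hG5 hGK x h hh
  calc |(-W (x + 2*h) + 8 * W (x + h) - 8 * W (x - h) + W (x - 2*h)) / (12 * h)
        + ((-G (x + 2*h) + 8 * G (x + h) - 8 * G (x - h) + G (x - 2*h)) / (12 * h)
          - deriv G x)|
      ≤ |(-W (x + 2*h) + 8 * W (x + h) - 8 * W (x - h) + W (x - 2*h)) / (12 * h)|
        + |(-G (x + 2*h) + 8 * G (x + h) - 8 * G (x - h) + G (x - 2*h)) / (12 * h)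
          - deriv G x| := abs_add_le _ _
    _ ≤ 2 * (7 * (M * h ^ 4)) + 7 * (M * h ^ 4) := add_le_add t1 t2
    _ = 21 * (M * h ^ 4) := by ring



theorem mixed_derivative_formula_fourth_order :
    ∃ C : ℝ, 0 < C ∧ ∀ (u : ℝ × ℝ → ℝ) (x y h M : ℝ), 0 < h →
      ContDiff ℝ 6 u →
      (∀ i : ℕ, i ≤ 6 → ∀ p : ℝ × ℝ, ‖iteratedFDeriv ℝ i u p‖ ≤ M) →
      (let dy0 : (ℝ × ℝ → ℝ) → ℝ × ℝ → ℝ :=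
          fun w p => (w (p.1, p.2 + h) - w (p.1, p.2 - h)) / (2 * h)
       let d2y : (ℝ × ℝ → ℝ) → ℝ × ℝ → ℝ :=
          fun w p => (w (p.1, p.2 + h) - 2 * w p + w (p.1, p.2 - h)) / h ^ 2
       let dx0 : (ℝ × ℝ → ℝ) → ℝ × ℝ → ℝ :=
          fun w p => (w (p.1 + h, p.2) - w (p.1 - h, p.2)) / (2 * h)
       let d2x : (ℝ × ℝ → ℝ) → ℝ × ℝ → ℝ :=
          fun w p => (w (p.1 + h, p.2) - 2 * w p + w (p.1 - h, p.2)) / h ^ 2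
       let v : ℝ × ℝ → ℝ := fun p => dy0 u p - h ^ 2 / 6 * d2y (dy0 u) p
       |dx0 v (x, y) - h ^ 2 / 6 * d2x (dx0 v) (x, y)
          - deriv (fun s => deriv (fun t => u (s, t)) y) x| ≤ C * h ^ 4 * M) := by
  refine ⟨21, by norm_num, ?_⟩
  intro u x y h M hh hu hM
  intro dy0 d2y dx0 d2x v
  have key : dx0 v (x, y) - h ^ 2 / 6 * d2x (dx0 v) (x, y)
      = (-Phi u y h (x + 2*h) + 8 * Phi u y h (x + h) - 8 * Phi u y h (x - h)
        + Phi u y h (x - 2*h)) / (12 * h) := by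
    simp only [dx0, d2x, v, dy0, d2y, Phi]
    have hne : h ≠ 0 := ne_of_gt hh
    field_simp
    ring_nf
  rw [key]
  calc |(-Phi u y h (x + 2*h) + 8 * Phi u y h (x + h) - 8 * Phi u y h (x - h)
        + Phi u y h (x - 2*h)) / (12 * h)
      - deriv (fun s => deriv (fun t => u (s, t)) y) x| ≤ 21 * (M * h ^ 4) :=
        main_est u x y h M hh hu hM
    _ = 21 * h ^ 4 * M := by ring
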